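/- Let m ≥ 4 and let (c₁,…,c_m) ∈ ℂ^m be a quiddity cycle with at least one non-zero entry. Then there exists a triangulation T of the convex m-gon such that for every diagonal (i,j) ∈ T the frieze entry of (i,j), i.e. the (1,1)-entry of η(c_i)·η(c_{i+1})⋯η(c_{j−2}), is non-zero. -/
import Mathlib


/-- The matrix `η(c) = !![c, -1; 1, 0]` over `ℂ`. -/
def eta (c : ℂ) : Matrix (Fin 2) (Fin 2) ℂ := !![c, -1; 1, 0]

/-- A diagonal of the convex `m`-gon with vertices `1, …, m`. -/
def IsDiagonal (m : ℕ) (p : ℕ × ℕ) : Prop :=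
  1 ≤ p.1 ∧ p.1 < p.2 ∧ p.2 ≤ m ∧ 2 ≤ p.2 - p.1 ∧ p ≠ (1, m)

/-- Two diagonals cross. -/
def Cross (p q : ℕ × ℕ) : Prop :=
  (p.1 < q.1 ∧ q.1 < p.2 ∧ p.2 < q.2) ∨ (q.1 < p.1 ∧ p.1 < q.2 ∧ q.2 < p.2)

/-- A triangulation of the convex `m`-gon: a set of `m − 3` pairwise non-crossing
diagonals. -/
def IsTriangulation (m : ℕ) (T : Finset (ℕ × ℕ)) : Prop :=
  T.card = m - 3 ∧ (∀ p ∈ T, IsDiagonal m p) ∧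
    ∀ p ∈ T, ∀ q ∈ T, p ≠ q → ¬ Cross p q

noncomputable def P (c : ℕ → ℂ) (i n : ℕ) : Matrix (Fin 2) (Fin 2) ℂ :=
  ((List.range n).map (fun k => eta (c (i + k)))).prod

lemma P_zero (c : ℕ → ℂ) (i : ℕ) : P c i 0 = 1 := rfl

lemma P_succ (c : ℕ → ℂ) (i n : ℕ) : P c i (n+1) = P c i n * eta (c (i+n)) := by
  unfold P
  rw [List.range_succ, List.map_append, List.prod_append]
  simp

lemma P_add (c : ℕ → ℂ) (i a b : ℕ) : P c i (a+b) = P c i a * P c (i+a) b := by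
  induction b with
  | zero => simp [P_zero]
  | succ b ih => rw [← Nat.add_assoc, P_succ, ih, P_succ, Matrix.mul_assoc, Nat.add_assoc]

lemma P_one (c : ℕ → ℂ) (i : ℕ) : P c i 1 = eta (c i) := by
  rw [show (1:ℕ) = 0 + 1 from rfl, P_succ]; simp [P_zero]

lemma P_succ' (c : ℕ → ℂ) (i n : ℕ) : P c i (n+1) = eta (c i) * P c (i+1) n := by
  rw [show n + 1 = 1 + n by omega, P_add, P_one]

lemma P_congr {c d : ℕ → ℂ} {i j : ℕ} (n : ℕ) (h : ∀ k, k < n → c (i+k) = d (j+k)) :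
    P c i n = P d j n := by
  unfold P
  congr 1
  apply List.map_congr_left
  intro k hk
  rw [h k (List.mem_range.mp hk)]

lemma eta_det (z : ℂ) : (eta z).det = 1 := by simp [eta, Matrix.det_fin_two_of]

lemma P_det (c : ℕ → ℂ) (i n : ℕ) : (P c i n).det = 1 := by
  induction n with
  | zero => simp [P_zero]
  | succ n ih => rw [P_succ, Matrix.det_mul, ih, eta_det, one_mul]

lemma mul_adj {A : Matrix (Fin 2) (Fin 2) ℂ} (h : A.det = 1) : A * A.adjugate = 1 := by
  rw [Matrix.mul_adjugate, h, one_smul]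
lemma adj_mul {A : Matrix (Fin 2) (Fin 2) ℂ} (h : A.det = 1) : A.adjugate * A = 1 := by
  rw [Matrix.adjugate_mul, h, one_smul]
lemma adj_eta (z : ℂ) : (eta z).adjugate = !![0, 1; -1, z] := by
  rw [eta, Matrix.adjugate_fin_two]; norm_num

lemma mul_eta_00 (A : Matrix (Fin 2) (Fin 2) ℂ) (z : ℂ) :
    (A * eta z) 0 0 = A 0 0 * z + A 0 1 := by
  simp [eta, Matrix.mul_apply, Fin.sum_univ_two]
lemma mul_eta_01 (A : Matrix (Fin 2) (Fin 2) ℂ) (z : ℂ) :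
    (A * eta z) 0 1 = -A 0 0 := by
  simp [eta, Matrix.mul_apply, Fin.sum_univ_two]
lemma eta_mul_1j (A : Matrix (Fin 2) (Fin 2) ℂ) (z : ℂ) (j : Fin 2) :
    (eta z * A) 1 j = A 0 j := by
  simp [eta, Matrix.mul_apply, Fin.sum_univ_two]

lemma P_01 (c : ℕ → ℂ) (i n : ℕ) : (P c i (n+1)) 0 1 = -(P c i n) 0 0 := by
  rw [P_succ, mul_eta_01]
lemma P_00_one (c : ℕ → ℂ) (i : ℕ) : (P c i 1) 0 0 = c i := by
  rw [P_one]; simp [eta]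
lemma P_rec (c : ℕ → ℂ) (i n : ℕ) :
    (P c i (n+2)) 0 0 = (P c i (n+1)) 0 0 * c (i+n+1) - (P c i n) 0 0 := by
  rw [show n+2 = (n+1)+1 from rfl, P_succ, mul_eta_00, P_01]
  ring

lemma swap_eps {A B : Matrix (Fin 2) (Fin 2) ℂ} {ε : ℂ} (hε : ε ≠ 0)
    (h : A * B = ε • 1) : B * A = ε • 1 := by
  have h1 : A * (ε⁻¹ • B) = 1 := by
    rw [Matrix.mul_smul, h, smul_smul, inv_mul_cancel₀ hε, one_smul]
  have h2 := mul_eq_one_comm.mp h1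
  have := congrArg (fun M => ε • M) h2
  simpa [Matrix.smul_mul, smul_smul, mul_inv_cancel₀ hε] using this

lemma eta_zero_collapse (a b : ℂ) : eta a * eta 0 * eta b = -eta (a+b) := by
  ext i j
  fin_cases i <;> fin_cases j <;>
    simp [eta, Matrix.mul_apply, Fin.sum_univ_two]

-- from X * Y = ε • 1 with det Y = 1 : X = ε • Y.adjugate
lemma eq_eps_adj {X Y : Matrix (Fin 2) (Fin 2) ℂ} {ε : ℂ} (hY : Y.det = 1)
    (h : X * Y = ε • 1) : X = ε • Y.adjugate := by
  have := congrArg (fun M => M * Y.adjugate) h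
  simpa [Matrix.mul_assoc, mul_adj hY, Matrix.smul_mul] using this


lemma P_eq (c : ℕ → ℂ) {i j n k : ℕ} (h1 : i = j) (h2 : n = k) : P c i n = P c j k := by
  subst h1; subst h2; rfl

lemma QF {c : ℕ → ℂ} {ε : ℂ} (n : ℕ) (hQ : P c 1 (n+2) = ε • 1) :
    (P c 1 n) 0 0 = -ε := by
  have hd : P c 1 (n+2) = P c 1 n * (eta (c (1+n)) * eta (c (1+n+1))) := by
    rw [show n+2 = n + (1+1) by ring, P_add c 1 n (1+1), P_add c (1+n) 1 1, P_one, P_one]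
  have hY : (eta (c (1+n)) * eta (c (1+n+1))).det = 1 := by
    rw [Matrix.det_mul, eta_det, eta_det, one_mul]
  have hX : P c 1 n = ε • (eta (c (1+n)) * eta (c (1+n+1))).adjugate :=
    eq_eps_adj hY (hd ▸ hQ)
  rw [hX, Matrix.adjugate_mul_distrib, adj_eta, adj_eta]
  simp [Matrix.mul_apply, Fin.sum_univ_two, Matrix.smul_apply]

lemma adj_triple_00 (u w : ℂ) (M : Matrix (Fin 2) (Fin 2) ℂ) :
    ((eta u).adjugate * (M.adjugate * (eta w).adjugate)) 0 0 = -(M 0 0) := by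
  rw [adj_eta, adj_eta, Matrix.adjugate_fin_two]
  simp [Matrix.mul_apply, Fin.sum_univ_two]

-- glide symmetry, generic case
lemma glide {c : ℕ → ℂ} {ε : ℂ} (hε : ε ≠ 0) (a g e : ℕ)
    (hQ : P c 1 (a+1+g+1+(e+1)) = ε • 1) :
    (P c (a+g+3) (e+1) * P c 1 a) 0 0 = -ε * (P c (a+2) g) 0 0 := by
  have hd : P c 1 (a+1+g+1+(e+1)) = P c 1 a * (eta (c (a+1)) *
      (P c (a+2) g * (eta (c (a+g+2)) * P c (a+g+3) (e+1)))) := by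
    rw [show a+1+g+1+(e+1) = a + (1 + (g + (1 + (e+1)))) by ring,
      P_add c 1 a (1 + (g + (1 + (e+1)))),
      P_add c (1+a) 1 (g + (1 + (e+1))),
      P_add c (1+a+1) g (1 + (e+1)),
      P_add c (1+a+1+g) 1 (e+1), P_one, P_one,
      show (1:ℕ)+a = a+1 by ring, show a+1+1 = a+2 by ring,
      show a+2+g = a+g+2 by ring, show a+g+2+1 = a+g+3 by ring]
  have h1 : P c 1 a * (eta (c (a+1)) *
      (P c (a+2) g * (eta (c (a+g+2)) * P c (a+g+3) (e+1)))) = ε • 1 := hd ▸ hQ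
  have h2 := swap_eps hε h1
  have h3 : eta (c (a+1)) * (P c (a+2) g * (eta (c (a+g+2)) *
      (P c (a+g+3) (e+1) * P c 1 a))) = ε • 1 := by
    rw [← h2]; simp [Matrix.mul_assoc]
  have h4 : P c (a+2) g * (eta (c (a+g+2)) * (P c (a+g+3) (e+1) * P c 1 a))
      = ε • (eta (c (a+1))).adjugate := by
    have := congrArg (fun X => (eta (c (a+1))).adjugate * X) h3
    simpa [← Matrix.mul_assoc, adj_mul (eta_det (c (a+1))), Matrix.mul_smul] using this
  have h5 : eta (c (a+g+2)) * (P c (a+g+3) (e+1) * P c 1 a)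
      = ε • ((P c (a+2) g).adjugate * (eta (c (a+1))).adjugate) := by
    have := congrArg (fun X => (P c (a+2) g).adjugate * X) h4
    simpa [← Matrix.mul_assoc, adj_mul (P_det c (a+2) g), Matrix.mul_smul] using this
  have h6 : P c (a+g+3) (e+1) * P c 1 a
      = ε • ((eta (c (a+g+2))).adjugate * ((P c (a+2) g).adjugate * (eta (c (a+1))).adjugate)) := by
    have := congrArg (fun X => (eta (c (a+g+2))).adjugate * X) h5
    simpa [← Matrix.mul_assoc, adj_mul (eta_det (c (a+g+2))), Matrix.mul_smul] using this
  rw [h6, Matrix.smul_apply, adj_triple_00]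
  simp [smul_eq_mul]

-- glide symmetry, boundary case (rotated diagonal hitting vertex 1)
lemma glide1 {c : ℕ → ℂ} {ε : ℂ} (hε : ε ≠ 0) (b f : ℕ)
    (hQ : P c 1 (b+1+1+(f+1)+1) = ε • 1) :
    (P c 1 (b+1)) 0 0 = -ε * (P c (b+3) (f+1)) 0 0 := by
  have hd : P c 1 (b+1+1+(f+1)+1) = P c 1 (b+1) *
      (eta (c (b+2)) * (P c (b+3) (f+1) * eta (c (b+f+4)))) := by
    rw [show b+1+1+(f+1)+1 = (b+1) + (1 + ((f+1) + 1)) by ring,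
      P_add c 1 (b+1) (1 + ((f+1)+1)),
      P_add c (1+(b+1)) 1 ((f+1)+1),
      P_add c (1+(b+1)+1) (f+1) 1, P_one, P_one,
      show (1:ℕ)+(b+1) = b+2 by ring, show b+2+1 = b+3 by ring,
      show b+3+(f+1) = b+f+4 by ring]
  have hRdet : (eta (c (b+2)) * (P c (b+3) (f+1) * eta (c (b+f+4)))).det = 1 := by
    simp [Matrix.det_mul, eta_det, P_det]
  have hX : P c 1 (b+1) = ε • (eta (c (b+2)) * (P c (b+3) (f+1) * eta (c (b+f+4)))).adjugate :=
    eq_eps_adj hRdet (hd ▸ hQ)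
  have hadj : (eta (c (b+2)) * (P c (b+3) (f+1) * eta (c (b+f+4)))).adjugate 0 0
      = (eta (c (b+2)) * (P c (b+3) (f+1) * eta (c (b+f+4)))) 1 1 := by
    rw [Matrix.adjugate_fin_two]; simp
  have hR11 : (eta (c (b+2)) * (P c (b+3) (f+1) * eta (c (b+f+4)))) 1 1
      = -(P c (b+3) (f+1)) 0 0 := by
    rw [eta_mul_1j, mul_eta_01]
  rw [hX, Matrix.smul_apply, hadj, hR11]
  simp [smul_eq_mul]

lemma fan (m : ℕ) (hm : 4 ≤ m) (c : ℕ → ℂ) {ε : ℂ} (hε : ε ≠ 0)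
    (hQ : P c 1 m = ε • 1)
    (hc : ∀ n, 1 ≤ n → n ≤ m - 3 → (P c 1 n) 0 0 = 0 → c (n+1) ≠ 0) :
    ∃ T : Finset (ℕ × ℕ), IsTriangulation m T ∧
      ∀ p ∈ T, (P c p.1 (p.2 - p.1 - 1)) 0 0 ≠ 0 := by
  classical
  have hQ' : P c 1 ((m-2)+2) = ε • 1 := by rw [show m-2+2 = m by omega]; exact hQ
  have hF : (P c 1 (m-2)) 0 0 = -ε := QF (m-2) hQ'
  have hFne : (P c 1 (m-2)) 0 0 ≠ 0 := by rw [hF]; exact neg_ne_zero.mpr hε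
  -- zeros of the fan sequence are isolated
  have prop : ∀ n, n + 1 ≤ m - 2 → (P c 1 n) 0 0 = 0 → (P c 1 (n+1)) 0 0 = 0 → False := by
    intro n hn h0 h1
    have key : ∀ d, n + d ≤ m - 2 → (P c 1 (n+d)) 0 0 = 0 := by
      intro d
      induction d using Nat.strong_induction_on with
      | _ d ih =>
        intro hd
        match d with
        | 0 => exact h0
        | 1 => exact h1
        | (d+2) =>
          have e1 := ih (d+1) (by omega) (by omega)
          have e2 := ih d (by omega) (by omega)
          rw [show n+(d+1) = n+d+1 from rfl] at e1
          have hrec := P_rec c 1 (n+d)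
          rw [show n+(d+2) = n+d+2 from rfl, hrec, e1, e2]
          ring
    have := key (m - 2 - n) (by omega)
    rw [show n + (m-2-n) = m - 2 by omega] at this
    exact hFne this
  set D : ℕ → ℕ × ℕ := fun j => if (P c 1 (j-2)) 0 0 = 0 then (j-1, j+1) else (1, j) with hD
  refine ⟨(Finset.Icc 3 (m-1)).image D, ⟨?_, ?_, ?_⟩, ?_⟩
  · -- card
    rw [Finset.card_image_of_injOn, Nat.card_Icc]
    · omega
    · intro j hj j' hj' hEq
      simp only [Finset.coe_Icc, Set.mem_Icc] at hj hj'
      simp only [hD] at hEq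
      split_ifs at hEq <;> simp only [Prod.mk.injEq] at hEq <;> omega
  · -- diagonals
    intro p hp
    simp only [Finset.mem_image, Finset.mem_Icc] at hp
    obtain ⟨j, hj, rfl⟩ := hp
    simp only [hD]
    split_ifs <;>
      refine ⟨by omega, by omega, by omega, by omega, ?_⟩ <;>
      · simp only [ne_eq, Prod.mk.injEq, not_and]
        omega
  · -- non-crossing
    intro p hp q hq hne
    simp only [Finset.mem_image, Finset.mem_Icc] at hp hq
    obtain ⟨j, hj, rfl⟩ := hp
    obtain ⟨j', hj', rfl⟩ := hq
    simp only [hD] at hne ⊢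
    by_cases h1 : (P c 1 (j-2)) 0 0 = 0 <;> by_cases h2 : (P c 1 (j'-2)) 0 0 = 0 <;>
      simp only [h1, h2, if_pos, if_neg, if_true, if_false] at hne ⊢
    · -- ear-ear
      intro hcross
      dsimp only [Cross] at hcross
      have hadj : j' = j + 1 ∨ j = j' + 1 := by omega
      rcases hadj with h | h
      · have h2' : (P c 1 ((j-2)+1)) 0 0 = 0 := by
          rw [show (j-2)+1 = j'-2 by omega]; exact h2
        exact prop (j-2) (by omega) h1 h2'
      · have h1' : (P c 1 ((j'-2)+1)) 0 0 = 0 := by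
          rw [show (j'-2)+1 = j-2 by omega]; exact h1
        exact prop (j'-2) (by omega) h2 h1'
    · -- ear-fan
      intro hcross
      dsimp only [Cross] at hcross
      have : j = j' := by omega
      subst this
      exact h2 h1
    · -- fan-ear
      intro hcross
      dsimp only [Cross] at hcross
      have : j = j' := by omega
      subst this
      exact h1 h2
    · -- fan-fan
      intro hcross
      dsimp only [Cross] at hcross
      omega
  · -- entries
    intro p hp
    simp only [Finset.mem_image, Finset.mem_Icc] at hp
    obtain ⟨j, hj, rfl⟩ := hp
    simp only [hD]
    split_ifs with h1
    · -- ear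
      simp only
      rw [show (j+1) - (j-1) - 1 = 1 by omega, P_00_one]
      have := hc (j-2) (by omega) (by omega) h1
      rwa [show j-2+1 = j-1 by omega] at this
    · -- fan
      simp only
      rwa [show j - 1 - 1 = j - 2 by omega]

def rot (m s : ℕ) (c : ℕ → ℂ) : ℕ → ℂ := fun k => c ((k + s - 1) % m + 1)

lemma rotQ (m s : ℕ) (hs : s ≤ m) (hm : 1 ≤ m) {c : ℕ → ℂ} {ε : ℂ} (hε : ε ≠ 0)
    (hQ : P c 1 m = ε • 1) : P (rot m s c) 1 m = ε • 1 := by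
  have h1 : P (rot m s c) 1 (m - s) = P c (1+s) (m-s) := by
    apply P_congr
    intro k hk
    show c ((1 + k + s - 1) % m + 1) = c (1 + s + k)
    congr 1
    rw [show 1 + k + s - 1 = k + s by omega, Nat.mod_eq_of_lt (by omega)]
    omega
  have h2 : P (rot m s c) (1+(m-s)) s = P c 1 s := by
    apply P_congr
    intro k hk
    show c ((1 + (m - s) + k + s - 1) % m + 1) = c (1 + k)
    congr 1
    rw [show 1 + (m - s) + k + s - 1 = m + k by omega, Nat.add_mod_left,
      Nat.mod_eq_of_lt (by omega)]
    omega
  have h4 : P c 1 s * P c (1+s) (m-s) = ε • 1 := by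
    rw [← P_add, show s + (m-s) = m by omega]
    exact hQ
  rw [P_eq (rot m s c) rfl (show m = (m-s) + s by omega), P_add, h1, h2]
  exact swap_eps hε h4

lemma diag_facts {m : ℕ} {p : ℕ × ℕ} (h : IsDiagonal m p) :
    1 ≤ p.1 ∧ p.1 < p.2 ∧ p.2 ≤ m ∧ 2 ≤ p.2 - p.1 ∧ p.2 - p.1 ≤ m - 2 := by
  obtain ⟨h1, h2, h3, h4, h5⟩ := h
  rcases p with ⟨i, j⟩
  simp only [Prod.mk.injEq, ne_eq, not_and] at h5
  simp only at *
  refine ⟨h1, h2, h3, h4, ?_⟩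
  by_contra hcon
  exact h5 (by omega) (by omega)

lemma mk_diag {m : ℕ} {p : ℕ × ℕ} (h1 : 1 ≤ p.1) (h2 : p.1 < p.2) (h3 : p.2 ≤ m)
    (h4 : 2 ≤ p.2 - p.1) (h5 : p.2 - p.1 ≤ m - 2) (hm : 4 ≤ m) : IsDiagonal m p := by
  refine ⟨h1, h2, h3, h4, ?_⟩
  rcases p with ⟨i, j⟩
  simp only [Prod.mk.injEq, ne_eq, not_and] at *
  intro hi hj
  omega

lemma Prel_lemma {c c' : ℕ → ℂ} (h2 : c 2 = 0) (hc'1 : c' 1 = c 1 + c 3)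
    (hc' : ∀ k, 2 ≤ k → c' k = c (k+2)) (n : ℕ) : P c' 1 (n+1) = -(P c 1 (n+3)) := by
  have e1 : P c' 2 n = P c 4 n := by
    apply P_congr
    intro k hk
    rw [hc' (2+k) (by omega)]
    congr 1
    omega
  have e2 : P c 1 (n+3) = (eta (c 1) * (eta (c 2) * eta (c 3))) * P c 4 n := by
    rw [show n+3 = 3+n by ring, P_add c 1 3 n,
      show (3:ℕ) = 1+1+1 by rfl, P_add c 1 (1+1) 1, P_add c 1 1 1, P_one, P_one, P_one]
    norm_num [Matrix.mul_assoc]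
  have e3 : eta (c 1) * (eta (c 2) * eta (c 3)) = -eta (c' 1) := by
    rw [← Matrix.mul_assoc, h2, eta_zero_collapse, hc'1]
  rw [P_succ', e1, e2, e3]
  simp [Matrix.neg_mul]

lemma lift (m : ℕ) (hm : 5 ≤ m) (c : ℕ → ℂ) (h1 : c 1 ≠ 0) (h2 : c 2 = 0)
    (T' : Finset (ℕ × ℕ)) (c' : ℕ → ℂ)
    (hc'1 : c' 1 = c 1 + c 3) (hc' : ∀ k, 2 ≤ k → c' k = c (k+2))
    (hT' : IsTriangulation (m-2) T')
    (hE' : ∀ p ∈ T', (P c' p.1 (p.2 - p.1 - 1)) 0 0 ≠ 0) :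
    ∃ T : Finset (ℕ × ℕ), IsTriangulation m T ∧
      ∀ p ∈ T, (P c p.1 (p.2 - p.1 - 1)) 0 0 ≠ 0 := by
  classical
  obtain ⟨hcard', hdiag', hcross'⟩ := hT'
  have Prel : ∀ n : ℕ, P c' 1 (n+1) = -(P c 1 (n+3)) := Prel_lemma h2 hc'1 hc'
  refine ⟨T'.image (fun p => ((if p.1 = 1 then 1 else p.1 + 2 : ℕ), p.2 + 2))
    ∪ {(1,3), (1,4)}, ⟨?_, ?_, ?_⟩, ?_⟩
  · -- card
    rw [Finset.card_union_of_disjoint, Finset.card_image_of_injOn]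
    · rw [hcard']
      rw [show ({(1,3), (1,4)} : Finset (ℕ × ℕ)).card = 2 by decide]
      omega
    · intro p hp q hq hEq
      have hdp := diag_facts (hdiag' p (by simpa using hp))
      have hdq := diag_facts (hdiag' q (by simpa using hq))
      rcases p with ⟨a, b⟩; rcases q with ⟨a', b'⟩
      simp only [Prod.mk.injEq] at hEq ⊢
      simp only at hdp hdq
      split_ifs at hEq <;> omega
    · rw [Finset.disjoint_left]
      intro p hp hmem
      simp only [Finset.mem_image] at hp
      obtain ⟨⟨a, b⟩, hq, rfl⟩ := hp
      have hdq := diag_facts (hdiag' _ hq)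
      simp only at hdq
      simp only [Finset.mem_insert, Finset.mem_singleton, Prod.mk.injEq] at hmem
      rcases hmem with ⟨_, hb⟩ | ⟨_, hb⟩ <;> omega
  · -- diagonals
    intro p hp
    simp only [Finset.mem_union, Finset.mem_image, Finset.mem_insert, Finset.mem_singleton] at hp
    rcases hp with ⟨⟨a, b⟩, hq, rfl⟩ | hp | hp
    · have hd := diag_facts (hdiag' _ hq)
      simp only at hd
      refine mk_diag ?_ ?_ ?_ ?_ ?_ (by omega) <;> simp only <;>
        first | (split_ifs <;> omega) | omega
    · subst hp
      exact mk_diag (by norm_num) (by norm_num) (by omega) (by norm_num) (by omega) (by omega)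
    · subst hp
      exact mk_diag (by norm_num) (by norm_num) (by omega) (by norm_num) (by omega) (by omega)
  · -- non-crossing
    intro p hp q hq hne
    simp only [Finset.mem_union, Finset.mem_image, Finset.mem_insert, Finset.mem_singleton] at hp hq
    rcases hp with ⟨⟨a, b⟩, hp', rfl⟩ | hp | hp <;>
      rcases hq with ⟨⟨a', b'⟩, hq', rfl⟩ | hq | hq
    · -- image-image
      have hdp := diag_facts (hdiag' _ hp')
      have hdq := diag_facts (hdiag' _ hq')
      simp only at hdp hdq
      have hne' : ((a,b) : ℕ × ℕ) ≠ (a',b') := by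
        intro hcon
        rw [Prod.mk.injEq] at hcon
        apply hne
        rw [hcon.1, hcon.2]
      have hnc := hcross' _ hp' _ hq' hne'
      intro hcr
      apply hnc
      dsimp only [Cross] at hcr ⊢
      split_ifs at hcr <;> omega
    · subst hq
      have hdp := diag_facts (hdiag' _ hp')
      simp only at hdp
      intro hcr
      dsimp only [Cross] at hcr
      split_ifs at hcr <;> omega
    · subst hq
      have hdp := diag_facts (hdiag' _ hp')
      simp only at hdp
      intro hcr
      dsimp only [Cross] at hcr
      split_ifs at hcr <;> omega
    · subst hp
      have hdq := diag_facts (hdiag' _ hq')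
      simp only at hdq
      intro hcr
      dsimp only [Cross] at hcr
      split_ifs at hcr <;> omega
    · subst hp; subst hq; exact absurd rfl hne
    · subst hp; subst hq
      intro hcr
      dsimp only [Cross] at hcr
      omega
    · subst hp
      have hdq := diag_facts (hdiag' _ hq')
      simp only at hdq
      intro hcr
      dsimp only [Cross] at hcr
      split_ifs at hcr <;> omega
    · subst hp; subst hq
      intro hcr
      dsimp only [Cross] at hcr
      omega
    · subst hp; subst hq; exact absurd rfl hne
  · -- entries
    intro p hp
    simp only [Finset.mem_union, Finset.mem_image, Finset.mem_insert, Finset.mem_singleton] at hp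
    rcases hp with ⟨⟨a, b⟩, hq, rfl⟩ | hp | hp
    · have hd := diag_facts (hdiag' _ hq)
      simp only at hd
      have hEq := hE' _ hq
      simp only at hEq
      by_cases ha : a = 1
      · subst ha
        rw [if_pos rfl]
        simp only
        rw [P_eq c rfl (show b + 2 - 1 - 1 = (b-3) + 3 by omega)]
        have hP := Prel (b - 3)
        rw [P_eq c' rfl (show b - 1 - 1 = (b-3) + 1 by omega), hP] at hEq
        intro hcon
        apply hEq
        simp only [Matrix.neg_apply, hcon, neg_zero]
      · rw [if_neg ha]
        simp only
        rw [P_eq c rfl (show b + 2 - (a + 2) - 1 = b - a - 1 by omega)]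
        have : P c (a+2) (b - a - 1) = P c' a (b - a - 1) := by
          apply P_congr
          intro k hk
          rw [hc' (a+k) (by omega)]
          congr 1
          omega
        rw [this]
        exact hEq
    · subst hp
      simp only
      rw [P_eq c rfl (show 3 - 1 - 1 = 1 by norm_num), P_00_one]
      exact h1
    · subst hp
      simp only
      rw [P_eq c rfl (show 4 - 1 - 1 = 1 + 1 by norm_num), P_succ, P_one, mul_eta_00]
      simp [eta, h2]

lemma transfer (m : ℕ) (hm : 4 ≤ m) (s : ℕ) (hs : s ≤ m) (c : ℕ → ℂ) {ε : ℂ} (hε : ε ≠ 0)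
    (hQ : P c 1 m = ε • 1)
    (T : Finset (ℕ × ℕ)) (hT : IsTriangulation m T)
    (hE : ∀ p ∈ T, (P (rot m s c) p.1 (p.2 - p.1 - 1)) 0 0 ≠ 0) :
    ∃ T' : Finset (ℕ × ℕ), IsTriangulation m T' ∧
      ∀ p ∈ T', (P c p.1 (p.2 - p.1 - 1)) 0 0 ≠ 0 := by
  classical
  obtain ⟨hcard, hdiag, hcross⟩ := hT
  refine ⟨T.image (fun p => if p.2 + s ≤ m then (p.1+s, p.2+s)
      else if p.1 + s ≤ m then (p.2+s-m, p.1+s) else (p.1+s-m, p.2+s-m)), ⟨?_, ?_, ?_⟩, ?_⟩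
  · rw [Finset.card_image_of_injOn, hcard]
    intro p hp q hq hEq
    have hdp := diag_facts (hdiag p (by simpa using hp))
    have hdq := diag_facts (hdiag q (by simpa using hq))
    rcases p with ⟨a, b⟩; rcases q with ⟨a', b'⟩
    simp only at hdp hdq hEq ⊢
    split_ifs at hEq <;> simp only [Prod.mk.injEq] at hEq ⊢ <;> omega
  · intro p hp
    simp only [Finset.mem_image] at hp
    obtain ⟨⟨a, b⟩, hq, rfl⟩ := hp
    have hd := diag_facts (hdiag _ hq)
    simp only at hd ⊢
    split_ifs <;> refine mk_diag ?_ ?_ ?_ ?_ ?_ (by omega) <;> simp only <;> omega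
  · intro p hp q hq hne
    simp only [Finset.mem_image] at hp hq
    obtain ⟨⟨a, b⟩, hp', rfl⟩ := hp
    obtain ⟨⟨a', b'⟩, hq', rfl⟩ := hq
    have hdp := diag_facts (hdiag _ hp')
    have hdq := diag_facts (hdiag _ hq')
    simp only at hdp hdq
    have hne' : ((a,b) : ℕ × ℕ) ≠ (a',b') := by
      intro hcon
      rw [Prod.mk.injEq] at hcon
      apply hne
      rw [hcon.1, hcon.2]
    have hnc := hcross _ hp' _ hq' hne'
    intro hcr
    apply hnc
    dsimp only [Cross] at hcr ⊢
    split_ifs at hcr <;> omega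
  · intro p hp
    simp only [Finset.mem_image] at hp
    obtain ⟨⟨a, b⟩, hq, rfl⟩ := hp
    have hd := diag_facts (hdiag _ hq)
    simp only at hd ⊢
    have hEq := hE _ hq
    simp only at hEq
    split_ifs with hc1 hc2
    · -- no wrap
      rw [P_eq c rfl (show b + s - (a+s) - 1 = b - a - 1 by omega)]
      have : P (rot m s c) a (b - a - 1) = P c (a+s) (b-a-1) := by
        apply P_congr
        intro k hk
        show c ((a + k + s - 1) % m + 1) = c (a + s + k)
        congr 1
        rw [Nat.mod_eq_of_lt (by omega)]
        omega
      rw [← this]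
      exact hEq
    · -- middle wrap : the rotated diagonal becomes (b+s-m, a+s)
      by_cases hy : b + s = m + 1
      · -- boundary case y = 1
        rw [P_eq c (show b + s - m = 1 by omega)
          (show a + s - (b + s - m) - 1 = (a+s-3) + 1 by omega)]
        have hQ1 : P c 1 ((a+s-3)+1+1+((m-(a+s)-1)+1)+1) = ε • 1 := by
          rw [P_eq c rfl (show (a+s-3)+1+1+((m-(a+s)-1)+1)+1 = m by omega)]
          exact hQ
        have hg := glide1 hε (a+s-3) (m-(a+s)-1) hQ1
        rw [hg]
        apply mul_ne_zero (neg_ne_zero.mpr hε)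
        have : P (rot m s c) a (b - a - 1) = P c (a+s) (b-a-1) := by
          apply P_congr
          intro k hk
          show c ((a + k + s - 1) % m + 1) = c (a + s + k)
          congr 1
          rw [Nat.mod_eq_of_lt (by omega)]
          omega
        rw [this, P_eq c (show a+s = (a+s-3)+3 by omega)
          (show b - a - 1 = (m-(a+s)-1)+1 by omega)] at hEq
        exact hEq
      · -- generic glide case, y ≥ 2
        have hy2 : 2 ≤ b + s - m := by omega
        rw [P_eq c (show b + s - m = (b+s-m-2) + 2 by omega)
          (show a + s - (b + s - m) - 1 = (a+s)-(b+s-m)-1 by omega)]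
        have hQ2 : P c 1 ((b+s-m-2)+1+((a+s)-(b+s-m)-1)+1+((m-(a+s))+1)) = ε • 1 := by
          rw [P_eq c rfl (show (b+s-m-2)+1+((a+s)-(b+s-m)-1)+1+((m-(a+s))+1) = m by omega)]
          exact hQ
        have hg := glide hε (b+s-m-2) ((a+s)-(b+s-m)-1) (m-(a+s)) hQ2
        -- identify the product in hg with the rotated entry
        have hsplit : P (rot m s c) a (b - a - 1) =
            P (rot m s c) a ((m-(a+s))+1) * P (rot m s c) (a + ((m-(a+s))+1)) (b+s-m-2) := by
          rw [P_eq (rot m s c) rfl (show b - a - 1 = ((m-(a+s))+1) + (b+s-m-2) by omega), P_add]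
        have e1 : P (rot m s c) a ((m-(a+s))+1) = P c (a+s) ((m-(a+s))+1) := by
          apply P_congr
          intro k hk
          show c ((a + k + s - 1) % m + 1) = c (a + s + k)
          congr 1
          rw [Nat.mod_eq_of_lt (by omega)]
          omega
        have e2 : P (rot m s c) (a + ((m-(a+s))+1)) (b+s-m-2) = P c 1 (b+s-m-2) := by
          apply P_congr
          intro k hk
          show c ((a + ((m-(a+s))+1) + k + s - 1) % m + 1) = c (1 + k)
          congr 1
          rw [show a + ((m-(a+s))+1) + k + s - 1 = m + k by omega, Nat.add_mod_left,
            Nat.mod_eq_of_lt (by omega)]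
          omega
        rw [hsplit, e1, e2] at hEq
        rw [P_eq c (show a+s = (b+s-m-2)+((a+s)-(b+s-m)-1)+3 by omega) rfl] at e1
        -- now hEq : (P c ((b+s-m-2)+..+3) (..) * P c 1 (b+s-m-2)) 0 0 ≠ 0 after matching
        rw [P_eq c (show (b+s-m-2)+((a+s)-(b+s-m)-1)+3 = a+s by omega)
          (show (m-(a+s))+1 = (m-(a+s))+1 by rfl)] at hg
        intro hcon
        rw [P_eq c (show (b+s-m-2)+2 = b+s-m-2+2 by rfl) rfl, hcon, mul_zero] at hg
        exact hEq hg
    · -- full wrap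
      rw [P_eq c rfl (show b + s - m - (a+s-m) - 1 = b - a - 1 by omega)]
      have : P (rot m s c) a (b - a - 1) = P c (a+s-m) (b-a-1) := by
        apply P_congr
        intro k hk
        show c ((a + k + s - 1) % m + 1) = c (a + s - m + k)
        congr 1
        have h2m : a + k + s - 1 - m < m := by omega
        rw [show a + k + s - 1 = m + (a + k + s - 1 - m) by omega, Nat.add_mod_left,
          Nat.mod_eq_of_lt h2m]
        omega
      rw [← this]
      exact hEq

lemma four_zero {c : ℕ → ℂ} {ε : ℂ} (hQ : P c 1 4 = ε • 1) (h1 : c 1 = 0) (h2 : c 2 = 0) :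
    c 3 = 0 ∧ c 4 = 0 := by
  have eta00 : eta 0 * eta 0 = (-1 : Matrix (Fin 2) (Fin 2) ℂ) := by
    ext i j
    fin_cases i <;> fin_cases j <;> simp [eta, Matrix.mul_apply, Fin.sum_univ_two]
  have hP : P c 1 4 = (eta (c 1) * eta (c 2)) * (eta (c 3) * eta (c 4)) := by
    rw [P_eq c rfl (show 4 = 2+2 by norm_num), P_add c 1 2 2,
        P_add c 1 1 1, P_add c (1+2) 1 1, P_one, P_one, P_one, P_one]
  rw [hP, h1, h2, eta00, neg_one_mul] at hQ
  constructor
  · have h01 := congrFun (congrFun hQ 0) 1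
    simp only [Matrix.neg_apply, mul_eta_01, Matrix.smul_apply, Matrix.one_apply_ne
      (show (0 : Fin 2) ≠ 1 by decide), smul_zero, neg_neg] at h01
    rw [← P_00_one c 3, P_one]
    exact h01
  · have h10 := congrFun (congrFun hQ 1) 0
    simp only [Matrix.neg_apply, eta_mul_1j, Matrix.smul_apply, Matrix.one_apply_ne
      (show (1 : Fin 2) ≠ 0 by decide), smul_zero, neg_eq_zero] at h10
    rw [← P_00_one c 4, P_one]
    exact h10

lemma find_pair (m : ℕ) (hm : 2 ≤ m) (c : ℕ → ℂ) (k t : ℕ)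
    (hk1 : 1 ≤ k) (hk2 : k ≤ m) (hkne : c k ≠ 0)
    (ht1 : 1 ≤ t) (ht2 : t ≤ m) (htz : c t = 0) :
    ∃ u, 1 ≤ u ∧ u ≤ m ∧ c u ≠ 0 ∧ c (u % m + 1) = 0 := by
  by_contra hcon
  have step : ∀ u, 1 ≤ u → u ≤ m → c u ≠ 0 → c (u % m + 1) ≠ 0 := by
    intro u h1 h2 h3 h4
    exact hcon ⟨u, h1, h2, h3, h4⟩
  have all : ∀ j : ℕ, c ((k - 1 + j) % m + 1) ≠ 0 := by
    intro j
    induction j with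
    | zero =>
      rw [Nat.add_zero, Nat.mod_eq_of_lt (by omega), show k - 1 + 1 = k by omega]
      exact hkne
    | succ j ih =>
      have hu1 : 1 ≤ (k - 1 + j) % m + 1 := by omega
      have hu2 : (k - 1 + j) % m + 1 ≤ m := by
        have := Nat.mod_lt (k - 1 + j) (show 0 < m by omega)
        omega
      have hstep := step _ hu1 hu2 ih
      have hmod : ((k - 1 + j) % m + 1) % m = (k - 1 + (j+1)) % m := by
        rw [Nat.mod_add_mod, show k - 1 + j + 1 = k - 1 + (j+1) by omega]
      rw [hmod] at hstep
      exact hstep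
  have := all (m + t - k)
  rw [show k - 1 + (m + t - k) = m + (t - 1) by omega, Nat.add_mod_left,
    Nat.mod_eq_of_lt (by omega), show t - 1 + 1 = t by omega] at this
  exact this htz

lemma aux : ∀ m : ℕ, 3 ≤ m → ∀ c : ℕ → ℂ, ∀ ε : ℂ, (ε = 1 ∨ ε = -1) →
    P c 1 m = ε • 1 → (m = 3 ∨ ∃ k, 1 ≤ k ∧ k ≤ m ∧ c k ≠ 0) →
    ∃ T : Finset (ℕ × ℕ), IsTriangulation m T ∧
      ∀ p ∈ T, (P c p.1 (p.2 - p.1 - 1)) 0 0 ≠ 0 := by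
  intro m
  induction m using Nat.strong_induction_on with
  | _ m IH =>
    intro hm3 c ε hεpm hQ hnz
    have hε : ε ≠ 0 := by rcases hεpm with h | h <;> rw [h] <;> norm_num
    by_cases hm3' : m = 3
    · subst hm3'
      exact ⟨∅, ⟨by simp, by simp, by simp⟩, by simp⟩
    have hm4 : 4 ≤ m := by omega
    by_cases hfan : ∀ n, 1 ≤ n → n ≤ m - 3 → (P c 1 n) 0 0 = 0 → c (n+1) ≠ 0
    · exact fan m hm4 c hε hQ hfan
    push_neg at hfan
    obtain ⟨n, hn1, hn3, hFn, hcz⟩ := hfan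
    have hnz' : ∃ k, 1 ≤ k ∧ k ≤ m ∧ c k ≠ 0 := hnz.resolve_left hm3'
    obtain ⟨k, hk1, hk2, hkne⟩ := hnz'
    by_cases hm4' : m = 4
    · -- m = 4 : contradiction, all entries zero
      exfalso
      subst hm4'
      have hn : n = 1 := by omega
      subst hn
      have hc1 : c 1 = 0 := by rw [← P_00_one c 1]; exact hFn
      have hc2 : c 2 = 0 := hcz
      obtain ⟨hc3, hc4⟩ := four_zero hQ hc1 hc2
      interval_cases k
      · exact hkne hc1
      · exact hkne hc2
      · exact hkne hc3
      · exact hkne hc4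
    have hm5 : 5 ≤ m := by omega
    obtain ⟨u, hu1, hu2, hune, husucc⟩ :=
      find_pair m (by omega) c k (n+1) hk1 hk2 hkne (by omega) (by omega) hcz
    -- rotate so the zero is at position 2
    have hQd : P (rot m (u-1) c) 1 m = ε • 1 := rotQ m (u-1) (by omega) (by omega) hε hQ
    have hd1 : rot m (u-1) c 1 = c u := by
      show c ((1 + (u-1) - 1) % m + 1) = c u
      rw [show 1 + (u-1) - 1 = u - 1 by omega, Nat.mod_eq_of_lt (by omega),
        show u - 1 + 1 = u by omega]
    have hd2 : rot m (u-1) c 2 = 0 := by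
      show c ((2 + (u-1) - 1) % m + 1) = 0
      rw [show 2 + (u-1) - 1 = u by omega]
      exact husucc
    have hεpm' : (-ε : ℂ) = 1 ∨ (-ε : ℂ) = -1 := by
      rcases hεpm with h | h <;> rw [h] <;> [right; left] <;> norm_num
    have hεne' : (-ε : ℂ) ≠ 0 := neg_ne_zero.mpr hε
    -- the reduced cycle
    by_cases hnzc' : ∃ k', 1 ≤ k' ∧ k' ≤ m - 2 ∧
        (fun t => if t = 1 then rot m (u-1) c 1 + rot m (u-1) c 3
          else rot m (u-1) c (t+2)) k' ≠ 0
    · set d := rot m (u-1) c with hd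
      set c' : ℕ → ℂ := fun t => if t = 1 then d 1 + d 3 else d (t+2) with hc'
      have hc'1 : c' 1 = d 1 + d 3 := by
        rw [hc']
        dsimp only
        rw [if_pos rfl]
      have hc'2 : ∀ j, 2 ≤ j → c' j = d (j+2) := by
        intro j hj
        simp only [hc', if_neg (show j ≠ 1 by omega)]
      have hQ' : P c' 1 (m-2) = (-ε) • 1 := by
        have := Prel_lemma hd2 hc'1 hc'2 (m-3)
        rw [P_eq c' rfl (show m-2 = (m-3)+1 by omega), this,
          P_eq d rfl (show (m-3)+3 = m by omega), hQd, neg_smul]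
      obtain ⟨T', hT', hE'⟩ := IH (m-2) (by omega) (by omega) c' (-ε) hεpm' hQ' (Or.inr hnzc')
      obtain ⟨Td, hTd, hEd⟩ := lift m hm5 d (hd1 ▸ hune) hd2 T' c' hc'1 hc'2 hT' hE'
      exact transfer m hm4 (u-1) (by omega) c hε hQ Td hTd hEd
    · -- degenerate: reduced cycle identically zero; shift the rotation by 2
      have hall : ∀ k', 1 ≤ k' → k' ≤ m - 2 →
          (if k' = 1 then rot m (u-1) c 1 + rot m (u-1) c 3
            else rot m (u-1) c (k'+2)) = 0 := by
        intro k' h1 h2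
        by_contra hne
        exact hnzc' ⟨k', h1, h2, hne⟩
      have hd13 : rot m (u-1) c 3 = -rot m (u-1) c 1 := by
        have := hall 1 (by omega) (by omega)
        rw [if_pos rfl] at this
        exact eq_neg_of_add_eq_zero_right this
      have hdz : ∀ t, 4 ≤ t → t ≤ m → rot m (u-1) c t = 0 := by
        intro t h4 hm'
        have := hall (t-2) (by omega) (by omega)
        rw [if_neg (show t - 2 ≠ 1 by omega), show t - 2 + 2 = t by omega] at this
        exact this
      set s2 := (u+1) % m with hs2
      have hs2m : s2 ≤ m := le_of_lt (Nat.mod_lt _ (by omega))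
      have hQe : P (rot m s2 c) 1 m = ε • 1 := rotQ m s2 hs2m (by omega) hε hQ
      -- e 1 = d 3, e 2 = d 4, e 3 = d 5
      have he1 : rot m s2 c 1 = rot m (u-1) c 3 := by
        show c ((1 + s2 - 1) % m + 1) = c ((3 + (u-1) - 1) % m + 1)
        congr 2
        rw [show 1 + s2 - 1 = s2 by omega, hs2, Nat.mod_mod_of_dvd _ (dvd_refl m),
          show 3 + (u-1) - 1 = u + 1 by omega]
      have he2 : rot m s2 c 2 = rot m (u-1) c 4 := by
        show c ((2 + s2 - 1) % m + 1) = c ((4 + (u-1) - 1) % m + 1)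
        congr 2
        rw [show 2 + s2 - 1 = s2 + 1 by omega, hs2, Nat.mod_add_mod,
          show 4 + (u-1) - 1 = u + 2 by omega, show u + 1 + 1 = u + 2 by omega]
      have he3 : rot m s2 c 3 = rot m (u-1) c 5 := by
        show c ((3 + s2 - 1) % m + 1) = c ((5 + (u-1) - 1) % m + 1)
        congr 2
        rw [show 3 + s2 - 1 = s2 + 2 by omega, hs2, Nat.mod_add_mod,
          show 5 + (u-1) - 1 = u + 3 by omega, show u + 1 + 2 = u + 3 by omega]
      have he1ne : rot m s2 c 1 ≠ 0 := by
        rw [he1, hd13]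
        exact neg_ne_zero.mpr (hd1 ▸ hune)
      have he2z : rot m s2 c 2 = 0 := by rw [he2]; exact hdz 4 (by omega) (by omega)
      have he3z : rot m s2 c 3 = 0 := by rw [he3]; exact hdz 5 (by omega) (by omega)
      set e := rot m s2 c with he
      set e' : ℕ → ℂ := fun t => if t = 1 then e 1 + e 3 else e (t+2) with he'
      have he'1 : e' 1 = e 1 + e 3 := by
        rw [he']
        dsimp only
        rw [if_pos rfl]
      have he'2 : ∀ j, 2 ≤ j → e' j = e (j+2) := by
        intro j hj
        simp only [he', if_neg (show j ≠ 1 by omega)]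
      have hQe' : P e' 1 (m-2) = (-ε) • 1 := by
        have := Prel_lemma he2z he'1 he'2 (m-3)
        rw [P_eq e' rfl (show m-2 = (m-3)+1 by omega), this,
          P_eq e rfl (show (m-3)+3 = m by omega), hQe, neg_smul]
      have hnze' : ∃ k', 1 ≤ k' ∧ k' ≤ m - 2 ∧ e' k' ≠ 0 := by
        refine ⟨1, by omega, by omega, ?_⟩
        rw [he'1, he3z, add_zero]
        exact he1ne
      obtain ⟨T', hT', hE'⟩ := IH (m-2) (by omega) (by omega) e' (-ε) hεpm' hQe' (Or.inr hnze')
      obtain ⟨Te, hTe, hEe⟩ := lift m hm5 e he1ne he2z T' e' he'1 he'2 hT' hE'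
      exact transfer m hm4 s2 hs2m c hε hQ Te hTe hEe

/-- If `(c₁, …, c_m)`, `m ≥ 4`, is a quiddity cycle with at least one non-zero entry, then
there is a triangulation of the `m`-gon all of whose diagonals `(i, j)` have non-zero
frieze entry, the `(1,1)`-entry of `η(c_i)·η(c_{i+1})⋯η(c_{j−2})`. -/
theorem stmt16 (m : ℕ) (hm : 4 ≤ m) (c : ℕ → ℂ)
    (hq : ((List.range m).map (fun k => eta (c (k + 1)))).prod = -1)
    (hnz : ∃ k : ℕ, 1 ≤ k ∧ k ≤ m ∧ c k ≠ 0) :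
    ∃ T : Finset (ℕ × ℕ), IsTriangulation m T ∧
      ∀ p ∈ T,
        (((List.range (p.2 - p.1 - 1)).map (fun k => eta (c (p.1 + k)))).prod) 0 0 ≠ 0 := by
  have hQ : P c 1 m = (-1 : ℂ) • 1 := by
    unfold P
    rw [neg_smul, one_smul]
    rw [show (fun k => eta (c (1 + k))) = fun k => eta (c (k + 1)) by
      funext k; rw [Nat.add_comm]]
    exact hq
  obtain ⟨T, hT, hE⟩ := aux m (by omega) c (-1) (Or.inr rfl) hQ (Or.inr hnz)
  exact ⟨T, hT, hE⟩
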